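/- Let Q, X₁₁, X₂₁, X₃₁ be finite-valued random variables such that X₁₁, X₂₁, X₃₁ are mutually conditionally independent given Q. Let S₁ = h(X₂₁, X₃₁) where h is one-to-one in each argument, and let Y₁ = f(X₁₁, S₁) where f is one-to-one in each argument. Then H(Y₁|X₂₁,Q) − H(X₃₁|Q) ≥ H(Y₁|Q) − H(S₁|Q); equivalently, H(X₂₁|Y₁,Q) ≥ H(X₂₁|S₁,Q). -/

import Mathlib

open scoped Classical
open Finset

/-- A probability mass function on a finite sample space, given as a real-valued
weight function that is nonnegative and sums to one. -/
structure FinPMF (Ω : Type) where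
  [fin : Fintype Ω]
  p : Ω → ℝ
  nonneg : ∀ ω, 0 ≤ p ω
  sum_one : ∑ ω, p ω = 1

/-- Probability of an event. -/
noncomputable def prE {Ω : Type} (μ : FinPMF Ω) (E : Ω → Prop) : ℝ :=
  letI := μ.fin
  ∑ ω, if E ω then μ.p ω else 0

/-- Probability that the random variable `X` takes the value `x`. -/
noncomputable def prX {Ω α : Type} (μ : FinPMF Ω) (X : Ω → α) (x : α) : ℝ :=
  prE μ (fun ω => X ω = x)

/-- Shannon entropy (base 2) of a random variable on a finite probability space. -/
noncomputable def entH {Ω α : Type} (μ : FinPMF Ω) (X : Ω → α) : ℝ :=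
  letI := μ.fin;
  -∑ x ∈ Finset.univ.image X, prX μ X x * Real.logb 2 (prX μ X x)

/-- Conditional entropy `H(X | Y)` (base 2). -/
noncomputable def condH {Ω α β : Type} (μ : FinPMF Ω) (X : Ω → α) (Y : Ω → β) : ℝ :=
  entH μ (fun ω => (X ω, Y ω)) - entH μ Y

/-- Conditional mutual information `I(X ; Y | Q)` (base 2). -/
noncomputable def condMI {Ω α β γ : Type} (μ : FinPMF Ω) (X : Ω → α) (Y : Ω → β)
    (Q : Ω → γ) : ℝ :=
  condH μ X Q + condH μ Y Q - condH μ (fun ω => (X ω, Y ω)) Q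

/-- A two-argument function is one-to-one in each argument. -/
def OneToOne {A B C : Type} (f : A → B → C) : Prop :=
  (∀ b, Function.Injective fun a => f a b) ∧ ∀ a, Function.Injective (f a)

/-- Conditional pmf `p_{X|U}(x|u)`. -/
noncomputable def condP {Ω α γ : Type} (μ : FinPMF Ω) (X : Ω → α) (U : Ω → γ)
    (x : α) (u : γ) : ℝ :=
  prE μ (fun ω => X ω = x ∧ U ω = u) / prX μ U u

/-- Independence of two random variables. -/
def IndepFun {Ω α β : Type} (μ : FinPMF Ω) (X : Ω → α) (S : Ω → β) : Prop :=
  ∀ x s, prE μ (fun ω => X ω = x ∧ S ω = s) = prX μ X x * prX μ S s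

/-- Conditional independence of `A` and `B` given `Z`:
for every `z` with `P(Z = z) > 0`, `P(A = a, B = b | Z = z) = P(A = a | Z = z) P(B = b | Z = z)`. -/
def CondIndepFun {Ω α β γ : Type} (μ : FinPMF Ω) (A : Ω → α) (B : Ω → β) (Z : Ω → γ) : Prop :=
  ∀ a b z, 0 < prX μ Z z →
    prE μ (fun ω => A ω = a ∧ B ω = b ∧ Z ω = z) / prX μ Z z =
      (prE μ (fun ω => A ω = a ∧ Z ω = z) / prX μ Z z) *
        (prE μ (fun ω => B ω = b ∧ Z ω = z) / prX μ Z z)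

/-- Mutual conditional independence of `X₁, X₂, X₃` given `Q`: the joint conditional pmf
factors into the product of the conditional marginals. -/
def CondIndepFun3 {Ω α₁ α₂ α₃ γ : Type} (μ : FinPMF Ω)
    (X₁ : Ω → α₁) (X₂ : Ω → α₂) (X₃ : Ω → α₃) (Q : Ω → γ) : Prop :=
  ∀ x₁ x₂ x₃ q, 0 < prX μ Q q →
    prE μ (fun ω => X₁ ω = x₁ ∧ X₂ ω = x₂ ∧ X₃ ω = x₃ ∧ Q ω = q) / prX μ Q q =
      (prE μ (fun ω => X₁ ω = x₁ ∧ Q ω = q) / prX μ Q q) *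
        (prE μ (fun ω => X₂ ω = x₂ ∧ Q ω = q) / prX μ Q q) *
        (prE μ (fun ω => X₃ ω = x₃ ∧ Q ω = q) / prX μ Q q)

/-- The ε-typical set (sequences whose empirical pmf is within a relative ε of `p`). -/
def Typical {𝒳 : Type} [Fintype 𝒳] (p : 𝒳 → ℝ) (ε : ℝ) (n : ℕ) (xs : Fin n → 𝒳) : Prop :=
  ∀ x : 𝒳, |((Finset.univ.filter fun i => xs i = x).card : ℝ) / n - p x| ≤ ε * p x

/-- The number of codewords `⌈2^{nR}⌉` at rate `R` and blocklength `n`. -/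
noncomputable def codeSize (R : ℝ) (n : ℕ) : ℕ := ⌈(2 : ℝ) ^ ((n : ℝ) * R)⌉₊

section Aux

variable {Ω : Type} (μ : FinPMF Ω)

lemma prE_nonneg (E : Ω → Prop) : 0 ≤ prE μ E := by
  letI := μ.fin
  refine Finset.sum_nonneg fun ω _ => ?_
  split
  · exact μ.nonneg ω
  · exact le_refl 0

lemma prE_congr {E F : Ω → Prop} (h : ∀ ω, E ω ↔ F ω) : prE μ E = prE μ F := by
  letI := μ.fin
  unfold prE
  exact Finset.sum_congr rfl fun ω _ => by rw [if_congr (h ω) rfl rfl]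

lemma prE_false : prE μ (fun _ => False) = 0 := by
  letI := μ.fin
  unfold prE; simp

lemma prE_mono {E F : Ω → Prop} (h : ∀ ω, E ω → F ω) : prE μ E ≤ prE μ F := by
  letI := μ.fin
  refine Finset.sum_le_sum fun ω _ => ?_
  by_cases hE : E ω
  · rw [if_pos hE, if_pos (h ω hE)]
  · rw [if_neg hE]
    split
    · exact μ.nonneg ω
    · exact le_refl 0

lemma prE_true : prE μ (fun _ => True) = 1 := by
  letI := μ.fin
  unfold prE; simpa using μ.sum_one

lemma partition {β : Type} [Fintype β] (W : Ω → β) (P : Ω → Prop) :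
    ∑ b, prE μ (fun ω => W ω = b ∧ P ω) = prE μ P := by
  letI := μ.fin
  unfold prE
  rw [Finset.sum_comm]
  refine Finset.sum_congr rfl fun ω _ => ?_
  by_cases hP : P ω
  · simp [hP]
  · simp [hP]

lemma sum_prX_one {α : Type} [Fintype α] (X : Ω → α) : ∑ x, prX μ X x = 1 := by
  have h := partition μ X (fun _ => True)
  rw [prE_true] at h
  rw [← h]
  refine Finset.sum_congr rfl fun x _ => ?_
  exact prE_congr μ (fun ω => by simp)

end Aux
section Aux2

variable {Ω : Type} (μ : FinPMF Ω)

lemma prX_pair {α β : Type} (A : Ω → α) (B : Ω → β) (a : α) (b : β) :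
    prX μ (fun ω => (A ω, B ω)) (a, b) = prE μ (fun ω => A ω = a ∧ B ω = b) :=
  prE_congr μ (fun ω => by simp [Prod.ext_iff])

lemma entH_eq {α : Type} [Fintype α] (X : Ω → α) :
    entH μ X = -∑ x, prX μ X x * Real.logb 2 (prX μ X x) := by
  letI := μ.fin
  unfold entH
  congr 1
  refine Finset.sum_subset (Finset.subset_univ _) (fun x _ hx => ?_)
  have hz : prX μ X x = 0 := by
    unfold prX prE
    refine Finset.sum_eq_zero fun ω _ => ?_
    rw [if_neg]
    intro hmem
    exact hx (Finset.mem_image.2 ⟨ω, Finset.mem_univ _, hmem⟩)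
  simp [hz]

lemma entH_comp {α β : Type} [Fintype α] [Fintype β] (X : Ω → α) (g : α → β)
    (hg : Function.Injective g) :
    entH μ (fun ω => g (X ω)) = entH μ X := by
  rw [entH_eq, entH_eq]
  congr 1
  have h1 : ∀ x, prX μ (fun ω => g (X ω)) (g x) = prX μ X x := fun x =>
    prE_congr μ (fun ω => ⟨fun hgx => hg hgx, fun hx => by simp [hx]⟩)
  have h2 : ∀ y : β, y ∉ Finset.univ.image g → prX μ (fun ω => g (X ω)) y = 0 := by
    intro y hy
    unfold prX prE
    refine Finset.sum_eq_zero fun ω _ => ?_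
    rw [if_neg]
    intro hmem
    exact hy (Finset.mem_image.2 ⟨X ω, Finset.mem_univ _, hmem⟩)
  rw [← Finset.sum_subset (Finset.subset_univ (Finset.univ.image g))
      (fun y _ hy => by simp [h2 y hy]),
    Finset.sum_image (fun a _ b _ hab => hg hab)]
  exact Finset.sum_congr rfl fun x _ => by rw [h1]

lemma gibbs {α : Type} [Fintype α] (p q : α → ℝ) (hp : ∀ x, 0 ≤ p x) (hq : ∀ x, 0 ≤ q x)
    (hpq : ∀ x, q x = 0 → p x = 0) (hsum : ∑ x, q x ≤ ∑ x, p x) :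
    ∑ x, p x * Real.logb 2 (q x) ≤ ∑ x, p x * Real.logb 2 (p x) := by
  have key : ∀ x, p x * Real.logb 2 (q x) - p x * Real.logb 2 (p x)
      ≤ (q x - p x) / Real.log 2 := by
    intro x
    rcases (hp x).eq_or_lt with hp0 | hp0
    · rw [← hp0]
      norm_num
      exact div_nonneg (hq x) (Real.log_nonneg one_le_two)
    · have hq0 : 0 < q x := by
        rcases (hq x).eq_or_lt with h0 | h0
        · exact absurd (hpq x h0.symm) (ne_of_gt hp0)
        · exact h0
      have hlog2 : 0 < Real.log 2 := Real.log_pos one_lt_two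
      have hmain : p x * Real.log (q x) - p x * Real.log (p x) ≤ q x - p x := by
        rw [← mul_sub, ← Real.log_div (ne_of_gt hq0) (ne_of_gt hp0)]
        calc p x * Real.log (q x / p x) ≤ p x * (q x / p x - 1) := by
              have := Real.log_le_sub_one_of_pos (show 0 < q x / p x by positivity)
              nlinarith
          _ = q x - p x := by field_simp
      calc p x * Real.logb 2 (q x) - p x * Real.logb 2 (p x)
          = (p x * Real.log (q x) - p x * Real.log (p x)) / Real.log 2 := by
            rw [Real.logb, Real.logb]; ring
        _ ≤ (q x - p x) / Real.log 2 := by gcongr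
  calc ∑ x, p x * Real.logb 2 (q x)
      = ∑ x, (p x * Real.logb 2 (p x) + (p x * Real.logb 2 (q x) - p x * Real.logb 2 (p x))) := by
        refine Finset.sum_congr rfl fun x _ => by ring
    _ = ∑ x, p x * Real.logb 2 (p x) + ∑ x, (p x * Real.logb 2 (q x) - p x * Real.logb 2 (p x)) := by
        rw [Finset.sum_add_distrib]
    _ ≤ ∑ x, p x * Real.logb 2 (p x) + ∑ x, (q x - p x) / Real.log 2 := by
        gcongr with x
        exact key x
    _ ≤ ∑ x, p x * Real.logb 2 (p x) := by
        have : ∑ x, (q x - p x) / Real.log 2 ≤ 0 := by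
          rw [← Finset.sum_div, Finset.sum_sub_distrib]
          apply div_nonpos_of_nonpos_of_nonneg
          · linarith
          · exact (Real.log_pos one_lt_two).le
        linarith

end Aux2
section Triple

variable {Ω α β γ : Type} [Fintype α] [Fintype β] [Fintype γ]
variable (μ : FinPMF Ω) (A : Ω → α) (B : Ω → β) (C : Ω → γ)

set_option linter.unusedSectionVars false

noncomputable def p3 : α × β × γ → ℝ :=
  fun x => prE μ fun ω => A ω = x.1 ∧ B ω = x.2.1 ∧ C ω = x.2.2

noncomputable def pAC : α → γ → ℝ := fun a c => prE μ fun ω => A ω = a ∧ C ω = c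
noncomputable def pBC : β → γ → ℝ := fun b c => prE μ fun ω => B ω = b ∧ C ω = c

lemma sum3 {M : Type} [AddCommMonoid M] (f : α × β × γ → M) :
    ∑ x, f x = ∑ a, ∑ b, ∑ c, f (a, b, c) := by
  rw [Fintype.sum_prod_type]
  exact Finset.sum_congr rfl fun a _ => Fintype.sum_prod_type _

lemma p3_nonneg (x : α × β × γ) : 0 ≤ p3 μ A B C x := prE_nonneg μ _

lemma margAC (a : α) (c : γ) : pAC μ A C a c = ∑ b, p3 μ A B C (a, b, c) := by
  unfold pAC
  rw [← partition μ B (fun ω => A ω = a ∧ C ω = c)]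
  exact Finset.sum_congr rfl fun b _ => prE_congr μ (fun ω => by aesop)

lemma margBC (b : β) (c : γ) : pBC μ B C b c = ∑ a, p3 μ A B C (a, b, c) := by
  unfold pBC
  rw [← partition μ A (fun ω => B ω = b ∧ C ω = c)]
  exact Finset.sum_congr rfl fun a _ => prE_congr μ (fun ω => by aesop)

lemma margC (c : γ) : prX μ C c = ∑ a, pAC μ A C a c := by
  unfold prX
  rw [← partition μ A (fun ω => C ω = c)]
  exact Finset.sum_congr rfl fun a _ => prE_congr μ (fun ω => by simp)

lemma margC' (c : γ) : prX μ C c = ∑ b, pBC μ B C b c := by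
  unfold prX
  rw [← partition μ B (fun ω => C ω = c)]
  exact Finset.sum_congr rfl fun b _ => prE_congr μ (fun ω => by simp)

lemma p3_le_pAC (x : α × β × γ) : p3 μ A B C x ≤ pAC μ A C x.1 x.2.2 :=
  prE_mono μ (fun ω hω => ⟨hω.1, hω.2.2⟩)

lemma p3_le_pBC (x : α × β × γ) : p3 μ A B C x ≤ pBC μ B C x.2.1 x.2.2 :=
  prE_mono μ (fun ω hω => ⟨hω.2.1, hω.2.2⟩)

lemma p3_le_pC (x : α × β × γ) : p3 μ A B C x ≤ prX μ C x.2.2 :=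
  prE_mono μ (fun ω hω => hω.2.2)

lemma sum_p3 : ∑ x, p3 μ A B C x = 1 := by
  rw [sum3]
  have h1 : ∀ a, ∑ b, ∑ c, p3 μ A B C (a, b, c)
      = prE μ (fun ω => A ω = a) := by
    intro a
    rw [← partition μ B (fun ω => A ω = a)]
    refine Finset.sum_congr rfl fun b _ => ?_
    rw [← partition μ C (fun ω => B ω = b ∧ A ω = a)]
    exact Finset.sum_congr rfl fun c _ => prE_congr μ (fun ω => by aesop)
  calc ∑ a, ∑ b, ∑ c, p3 μ A B C (a, b, c) = ∑ a, prE μ (fun ω => A ω = a) :=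
        Finset.sum_congr rfl fun a _ => h1 a
    _ = 1 := by
        rw [← prE_true μ, ← partition μ A (fun _ => True)]
        exact Finset.sum_congr rfl fun a _ => prE_congr μ (fun ω => by simp)

lemma entH_triple : entH μ (fun ω => (A ω, B ω, C ω))
    = -∑ x, p3 μ A B C x * Real.logb 2 (p3 μ A B C x) := by
  rw [entH_eq]
  congr 1
  refine Finset.sum_congr rfl fun x _ => ?_
  have : prX μ (fun ω => (A ω, B ω, C ω)) x = p3 μ A B C x :=
    prE_congr μ (fun ω => by simp [Prod.ext_iff])
  rw [this]

lemma entH_AC : entH μ (fun ω => (A ω, C ω))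
    = -∑ x, p3 μ A B C x * Real.logb 2 (pAC μ A C x.1 x.2.2) := by
  rw [entH_eq]
  congr 1
  rw [sum3, Fintype.sum_prod_type]
  refine Finset.sum_congr rfl fun a _ => ?_
  rw [Finset.sum_comm]
  refine Finset.sum_congr rfl fun c _ => ?_
  rw [prX_pair]
  show pAC μ A C a c * Real.logb 2 (pAC μ A C a c) = _
  rw [margAC μ A B C a c, Finset.sum_mul]
  refine Finset.sum_congr rfl fun b _ => ?_
  rw [← margAC]

lemma entH_BC : entH μ (fun ω => (B ω, C ω))
    = -∑ x, p3 μ A B C x * Real.logb 2 (pBC μ B C x.2.1 x.2.2) := by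
  rw [entH_eq]
  congr 1
  rw [sum3]
  rw [Finset.sum_comm]
  rw [Fintype.sum_prod_type]
  refine Finset.sum_congr rfl fun b _ => ?_
  rw [Finset.sum_comm]
  refine Finset.sum_congr rfl fun c _ => ?_
  rw [prX_pair]
  show pBC μ B C b c * Real.logb 2 (pBC μ B C b c) = _
  rw [margBC μ A B C b c, Finset.sum_mul]
  refine Finset.sum_congr rfl fun a _ => ?_
  rw [← margBC]

lemma entH_C : entH μ C = -∑ x, p3 μ A B C x * Real.logb 2 (prX μ C x.2.2) := by
  rw [entH_eq]
  congr 1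
  rw [sum3]
  have hc : ∀ c, prX μ C c * Real.logb 2 (prX μ C c)
      = ∑ a, ∑ b, p3 μ A B C (a, b, c) * Real.logb 2 (prX μ C c) := by
    intro c
    calc prX μ C c * Real.logb 2 (prX μ C c)
        = (∑ a, ∑ b, p3 μ A B C (a, b, c)) * Real.logb 2 (prX μ C c) := by
          congr 1
          rw [margC μ A C c]
          exact Finset.sum_congr rfl fun a _ => margAC μ A B C a c
      _ = ∑ a, ∑ b, p3 μ A B C (a, b, c) * Real.logb 2 (prX μ C c) := by
          rw [Finset.sum_mul]
          exact Finset.sum_congr rfl fun a _ => Finset.sum_mul _ _ _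
  calc ∑ c, prX μ C c * Real.logb 2 (prX μ C c)
      = ∑ c, ∑ a, ∑ b, p3 μ A B C (a, b, c) * Real.logb 2 (prX μ C c) :=
        Finset.sum_congr rfl fun c _ => hc c
    _ = ∑ a, ∑ c, ∑ b, p3 μ A B C (a, b, c) * Real.logb 2 (prX μ C c) :=
        Finset.sum_comm
    _ = ∑ a, ∑ b, ∑ c, p3 μ A B C (a, b, c) * Real.logb 2 (prX μ C c) :=
        Finset.sum_congr rfl fun a _ => Finset.sum_comm

end Triple
section Main

variable {Ω α β γ : Type} [Fintype α] [Fintype β] [Fintype γ]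
variable (μ : FinPMF Ω) (A : Ω → α) (B : Ω → β) (C : Ω → γ)

set_option linter.unusedSectionVars false

/-- Submodularity / nonnegativity of conditional mutual information. -/
lemma entH_submod :
    entH μ (fun ω => (A ω, B ω, C ω)) + entH μ C
      ≤ entH μ (fun ω => (A ω, C ω)) + entH μ (fun ω => (B ω, C ω)) := by
  classical
  set p := p3 μ A B C with hp
  set q : α × β × γ → ℝ := fun x =>
    if prX μ C x.2.2 = 0 then 0
    else pAC μ A C x.1 x.2.2 * pBC μ B C x.2.1 x.2.2 / prX μ C x.2.2 with hqdef
  have hCnn : ∀ c, 0 ≤ prX μ C c := fun c => prE_nonneg μ _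
  have hACnn : ∀ a c, 0 ≤ pAC μ A C a c := fun a c => prE_nonneg μ _
  have hBCnn : ∀ b c, 0 ≤ pBC μ B C b c := fun b c => prE_nonneg μ _
  have hqnn : ∀ x, 0 ≤ q x := by
    intro x
    rw [hqdef]
    dsimp only
    split
    · exact le_refl 0
    · exact div_nonneg (mul_nonneg (hACnn _ _) (hBCnn _ _)) (hCnn _)
  have hpq : ∀ x, q x = 0 → p x = 0 := by
    intro x hx
    rw [hqdef] at hx
    dsimp only at hx
    split at hx
    · next h0 =>
        rw [hp]
        linarith [p3_le_pC μ A B C x, p3_nonneg μ A B C x, h0]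
    · next h0 =>
        rw [hp]
        rcases mul_eq_zero.1 ((div_eq_zero_iff.1 hx).resolve_right h0) with h | h
        · linarith [p3_le_pAC μ A B C x, p3_nonneg μ A B C x, h]
        · linarith [p3_le_pBC μ A B C x, p3_nonneg μ A B C x, h]
  have hsumq : ∑ x, q x = 1 := by
    rw [sum3]
    have hc : ∀ c, ∑ a, ∑ b, q (a, b, c) = prX μ C c := by
      intro c
      by_cases h0 : prX μ C c = 0
      · simp [hqdef, h0]
      · have : ∀ a b, q (a, b, c) = pAC μ A C a c * (pBC μ B C b c / prX μ C c) := by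
          intro a b
          rw [hqdef]
          dsimp only
          rw [if_neg h0]
          ring
        calc ∑ a, ∑ b, q (a, b, c)
            = ∑ a, pAC μ A C a c * ∑ b, (pBC μ B C b c / prX μ C c) := by
              refine Finset.sum_congr rfl fun a _ => ?_
              rw [Finset.mul_sum]
              exact Finset.sum_congr rfl fun b _ => this a b
          _ = (∑ a, pAC μ A C a c) * ((∑ b, pBC μ B C b c) / prX μ C c) := by
              rw [← Finset.sum_mul, Finset.sum_div]
          _ = prX μ C c := by
              rw [← margC μ A C c, ← margC' μ B C c]
              field_simp
    calc ∑ a, ∑ b, ∑ c, q (a, b, c)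
        = ∑ a, ∑ c, ∑ b, q (a, b, c) :=
          Finset.sum_congr rfl fun a _ => Finset.sum_comm
      _ = ∑ c, ∑ a, ∑ b, q (a, b, c) := Finset.sum_comm
      _ = ∑ c, prX μ C c := Finset.sum_congr rfl fun c _ => hc c
      _ = 1 := sum_prX_one μ C
  have hgibbs := gibbs p q (p3_nonneg μ A B C) hqnn hpq
    (by rw [hsumq, sum_p3 μ A B C])
  have hkey : ∀ x, p x * Real.logb 2 (q x)
      = p x * Real.logb 2 (pAC μ A C x.1 x.2.2) + p x * Real.logb 2 (pBC μ B C x.2.1 x.2.2)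
        - p x * Real.logb 2 (prX μ C x.2.2) := by
    intro x
    rcases (p3_nonneg μ A B C x).eq_or_lt with h0 | h0
    · rw [hp, ← h0]; ring
    · have hC : 0 < prX μ C x.2.2 := lt_of_lt_of_le h0 (p3_le_pC μ A B C x)
      have hA : 0 < pAC μ A C x.1 x.2.2 := lt_of_lt_of_le h0 (p3_le_pAC μ A B C x)
      have hB : 0 < pBC μ B C x.2.1 x.2.2 := lt_of_lt_of_le h0 (p3_le_pBC μ A B C x)
      have hqx : q x = pAC μ A C x.1 x.2.2 * pBC μ B C x.2.1 x.2.2 / prX μ C x.2.2 := by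
        rw [hqdef]; dsimp only; rw [if_neg (ne_of_gt hC)]
      rw [hqx, Real.logb_div (by positivity) (ne_of_gt hC),
        Real.logb_mul (ne_of_gt hA) (ne_of_gt hB)]
      ring
  rw [entH_triple μ A B C, entH_C μ A B C, entH_AC μ A B C, entH_BC μ A B C]
  have hsum2 : ∑ x, p x * Real.logb 2 (q x)
      = ∑ x, p x * Real.logb 2 (pAC μ A C x.1 x.2.2)
        + ∑ x, p x * Real.logb 2 (pBC μ B C x.2.1 x.2.2)
        - ∑ x, p x * Real.logb 2 (prX μ C x.2.2) := by
    rw [← Finset.sum_add_distrib, ← Finset.sum_sub_distrib]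
    exact Finset.sum_congr rfl fun x _ => hkey x
  rw [hsum2] at hgibbs
  linarith

/-- Conditional independence implies additivity of entropy. -/
lemma entH_condIndep (hind : CondIndepFun μ A B C) :
    entH μ (fun ω => (A ω, B ω, C ω))
      = entH μ (fun ω => (A ω, C ω)) + entH μ (fun ω => (B ω, C ω)) - entH μ C := by
  rw [entH_triple μ A B C, entH_C μ A B C, entH_AC μ A B C, entH_BC μ A B C]
  have hkey : ∀ x, p3 μ A B C x * Real.logb 2 (p3 μ A B C x)
      = p3 μ A B C x * Real.logb 2 (pAC μ A C x.1 x.2.2)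
        + p3 μ A B C x * Real.logb 2 (pBC μ B C x.2.1 x.2.2)
        - p3 μ A B C x * Real.logb 2 (prX μ C x.2.2) := by
    intro x
    rcases (p3_nonneg μ A B C x).eq_or_lt with h0 | h0
    · rw [← h0]; ring
    · have hC : 0 < prX μ C x.2.2 := lt_of_lt_of_le h0 (p3_le_pC μ A B C x)
      have hA : 0 < pAC μ A C x.1 x.2.2 := lt_of_lt_of_le h0 (p3_le_pAC μ A B C x)
      have hB : 0 < pBC μ B C x.2.1 x.2.2 := lt_of_lt_of_le h0 (p3_le_pBC μ A B C x)
      have h := hind x.1 x.2.1 x.2.2 hC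
      have hfact : p3 μ A B C x = pAC μ A C x.1 x.2.2 * pBC μ B C x.2.1 x.2.2 / prX μ C x.2.2 := by
        unfold p3 pAC pBC
        field_simp at h ⊢
        exact mul_right_cancel₀ (ne_of_gt hC) (by linear_combination prX μ C x.2.2 * h)
      nth_rewrite 2 [hfact]
      rw [Real.logb_div (by positivity) (ne_of_gt hC),
        Real.logb_mul (ne_of_gt hA) (ne_of_gt hB)]
      ring
  rw [show (∑ x, p3 μ A B C x * Real.logb 2 (p3 μ A B C x))
      = ∑ x, (p3 μ A B C x * Real.logb 2 (pAC μ A C x.1 x.2.2)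
        + p3 μ A B C x * Real.logb 2 (pBC μ B C x.2.1 x.2.2)
        - p3 μ A B C x * Real.logb 2 (prX μ C x.2.2)) from
      Finset.sum_congr rfl fun x _ => hkey x,
    Finset.sum_sub_distrib, Finset.sum_add_distrib]
  ring

end Main
section CondIndepDerived

set_option linter.unusedSectionVars false

variable {Ω α₁ α₂ α₃ γ : Type} [Fintype α₁] [Fintype α₂] [Fintype α₃]
variable (μ : FinPMF Ω) (X₁ : Ω → α₁) (X₂ : Ω → α₂) (X₃ : Ω → α₃) (Q : Ω → γ)

lemma ci3_pair23 (hind : CondIndepFun3 μ X₁ X₂ X₃ Q) : CondIndepFun μ X₂ X₃ Q := by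
  intro b c q hq
  have key : ∀ a, prE μ (fun ω => X₁ ω = a ∧ X₂ ω = b ∧ X₃ ω = c ∧ Q ω = q)
      = prE μ (fun ω => X₁ ω = a ∧ Q ω = q) * prE μ (fun ω => X₂ ω = b ∧ Q ω = q)
        * prE μ (fun ω => X₃ ω = c ∧ Q ω = q) / (prX μ Q q * prX μ Q q) := by
    intro a
    have h4 := hind a b c q hq
    field_simp at h4
    rw [eq_div_iff (mul_ne_zero (ne_of_gt hq) (ne_of_gt hq))]
    exact mul_right_cancel₀ (ne_of_gt hq) (by linear_combination prX μ Q q * h4)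
  have hsum : prE μ (fun ω => X₂ ω = b ∧ X₃ ω = c ∧ Q ω = q)
      = prE μ (fun ω => X₂ ω = b ∧ Q ω = q) * prE μ (fun ω => X₃ ω = c ∧ Q ω = q)
        / prX μ Q q := by
    rw [← partition μ X₁ (fun ω => X₂ ω = b ∧ X₃ ω = c ∧ Q ω = q)]
    have hQsum : ∑ a, prE μ (fun ω => X₁ ω = a ∧ Q ω = q) = prX μ Q q :=
      partition μ X₁ (fun ω => Q ω = q)
    calc ∑ a, prE μ (fun ω => X₁ ω = a ∧ X₂ ω = b ∧ X₃ ω = c ∧ Q ω = q)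
        = ∑ a, prE μ (fun ω => X₁ ω = a ∧ Q ω = q)
            * (prE μ (fun ω => X₂ ω = b ∧ Q ω = q) * prE μ (fun ω => X₃ ω = c ∧ Q ω = q)
              / (prX μ Q q * prX μ Q q)) := by
          refine Finset.sum_congr rfl fun a _ => ?_
          rw [key a]; ring
      _ = (∑ a, prE μ (fun ω => X₁ ω = a ∧ Q ω = q))
            * (prE μ (fun ω => X₂ ω = b ∧ Q ω = q) * prE μ (fun ω => X₃ ω = c ∧ Q ω = q)
              / (prX μ Q q * prX μ Q q)) := by rw [Finset.sum_mul]
      _ = prX μ Q q * (prE μ (fun ω => X₂ ω = b ∧ Q ω = q)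
            * prE μ (fun ω => X₃ ω = c ∧ Q ω = q) / (prX μ Q q * prX μ Q q)) := by rw [hQsum]
      _ = prE μ (fun ω => X₂ ω = b ∧ Q ω = q) * prE μ (fun ω => X₃ ω = c ∧ Q ω = q)
            / prX μ Q q := by
          field_simp
          try ring
  rw [hsum]
  field_simp
  try ring

lemma ci3_pair1_23 (hind : CondIndepFun3 μ X₁ X₂ X₃ Q) :
    CondIndepFun μ X₁ (fun ω => (X₂ ω, X₃ ω)) Q := by
  intro a p q hq
  have h4 := hind a p.1 p.2 q hq
  have h23 := ci3_pair23 μ X₁ X₂ X₃ Q hind p.1 p.2 q hq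
  have e1 : prE μ (fun ω => X₁ ω = a ∧ (X₂ ω, X₃ ω) = p ∧ Q ω = q)
      = prE μ (fun ω => X₁ ω = a ∧ X₂ ω = p.1 ∧ X₃ ω = p.2 ∧ Q ω = q) :=
    prE_congr μ (fun ω => by simp [Prod.ext_iff]; tauto)
  have e2 : prE μ (fun ω => (X₂ ω, X₃ ω) = p ∧ Q ω = q)
      = prE μ (fun ω => X₂ ω = p.1 ∧ X₃ ω = p.2 ∧ Q ω = q) :=
    prE_congr μ (fun ω => by simp [Prod.ext_iff]; tauto)
  rw [e1, e2, h4, h23]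
  ring

lemma ci_comp {β δ : Type} [Fintype β] (A : Ω → α₁) (B : Ω → β) (C : Ω → γ) (g : β → δ)
    (hind : CondIndepFun μ A B C) : CondIndepFun μ A (fun ω => g (B ω)) C := by
  intro a s c hc
  have key : ∀ b, prE μ (fun ω => A ω = a ∧ B ω = b ∧ C ω = c) * prX μ C c
      = prE μ (fun ω => A ω = a ∧ C ω = c) * prE μ (fun ω => B ω = b ∧ C ω = c) := by
    intro b
    have hb := hind a b c hc
    field_simp at hb
    exact mul_right_cancel₀ (ne_of_gt hc) (by linear_combination prX μ C c * hb)
  have e1 : prE μ (fun ω => A ω = a ∧ g (B ω) = s ∧ C ω = c)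
      = ∑ b, if g b = s then prE μ (fun ω => A ω = a ∧ B ω = b ∧ C ω = c) else 0 := by
    rw [← partition μ B (fun ω => A ω = a ∧ g (B ω) = s ∧ C ω = c)]
    refine Finset.sum_congr rfl fun b _ => ?_
    by_cases hgb : g b = s
    · rw [if_pos hgb]
      refine prE_congr μ (fun ω => ?_)
      constructor
      · rintro ⟨h1, h2, _, h4⟩; exact ⟨h2, h1, h4⟩
      · rintro ⟨h2, h1, h4⟩; exact ⟨h1, h2, by rw [h1]; exact hgb, h4⟩
    · rw [if_neg hgb, ← prE_false μ]
      refine prE_congr μ (fun ω => ?_)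
      constructor
      · rintro ⟨h1, _, h3, _⟩; exact hgb (h1 ▸ h3)
      · intro hfalse; exact hfalse.elim
  have e2 : prE μ (fun ω => g (B ω) = s ∧ C ω = c)
      = ∑ b, if g b = s then prE μ (fun ω => B ω = b ∧ C ω = c) else 0 := by
    rw [← partition μ B (fun ω => g (B ω) = s ∧ C ω = c)]
    refine Finset.sum_congr rfl fun b _ => ?_
    by_cases hgb : g b = s
    · rw [if_pos hgb]
      refine prE_congr μ (fun ω => ?_)
      constructor
      · rintro ⟨h1, _, h3⟩; exact ⟨h1, h3⟩
      · rintro ⟨h1, h3⟩; exact ⟨h1, by rw [h1]; exact hgb, h3⟩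
    · rw [if_neg hgb, ← prE_false μ]
      refine prE_congr μ (fun ω => ?_)
      constructor
      · rintro ⟨h1, h2, _⟩; exact hgb (h1 ▸ h2)
      · intro hfalse; exact hfalse.elim
  have e3 : prE μ (fun ω => A ω = a ∧ g (B ω) = s ∧ C ω = c) * prX μ C c
      = prE μ (fun ω => A ω = a ∧ C ω = c) * prE μ (fun ω => g (B ω) = s ∧ C ω = c) := by
    rw [e1, e2, Finset.sum_mul, Finset.mul_sum]
    refine Finset.sum_congr rfl fun b _ => ?_
    by_cases hgb : g b = s
    · rw [if_pos hgb, if_pos hgb, key b]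
    · rw [if_neg hgb, if_neg hgb, zero_mul, mul_zero]
  field_simp
  linear_combination e3

end CondIndepDerived
set_option maxHeartbeats 2000000 in
/-- `H(Y₁|X₂₁,Q) − H(X₃₁|Q) ≥ H(Y₁|Q) − H(S₁|Q)`;
equivalently, `H(X₂₁|Y₁,Q) ≥ H(X₂₁|S₁,Q)`. -/
theorem third_term_ge_last
    {Ω 𝒬 𝒜 ℬ 𝒞 𝒮 𝒴 : Type} [Fintype 𝒬] [Nonempty 𝒬] [Fintype 𝒜] [Nonempty 𝒜]
    [Fintype ℬ] [Nonempty ℬ] [Fintype 𝒞] [Nonempty 𝒞] [Fintype 𝒮] [Nonempty 𝒮]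
    [Fintype 𝒴] [Nonempty 𝒴]
    (μ : FinPMF Ω) (Q : Ω → 𝒬) (X₁₁ : Ω → 𝒜) (X₂₁ : Ω → ℬ) (X₃₁ : Ω → 𝒞)
    (h : ℬ → 𝒞 → 𝒮) (f : 𝒜 → 𝒮 → 𝒴)
    (hindep : CondIndepFun3 μ X₁₁ X₂₁ X₃₁ Q)
    (hh : OneToOne h) (hf : OneToOne f) :
    (condH μ (fun ω => f (X₁₁ ω) (h (X₂₁ ω) (X₃₁ ω))) (fun ω => (X₂₁ ω, Q ω)) - condH μ X₃₁ Q ≥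
      condH μ (fun ω => f (X₁₁ ω) (h (X₂₁ ω) (X₃₁ ω))) Q - condH μ (fun ω => h (X₂₁ ω) (X₃₁ ω)) Q) ∧
    (condH μ X₂₁ (fun ω => (f (X₁₁ ω) (h (X₂₁ ω) (X₃₁ ω)), Q ω)) ≥
      condH μ X₂₁ (fun ω => (h (X₂₁ ω) (X₃₁ ω), Q ω))) := by
  -- derived conditional independences
  have c23 : CondIndepFun μ X₂₁ X₃₁ Q := ci3_pair23 μ X₁₁ X₂₁ X₃₁ Q hindep
  have c123 : CondIndepFun μ X₁₁ (fun ω => (X₂₁ ω, X₃₁ ω)) Q :=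
    ci3_pair1_23 μ X₁₁ X₂₁ X₃₁ Q hindep
  have c1S : CondIndepFun μ X₁₁ (fun ω => h (X₂₁ ω) (X₃₁ ω)) Q :=
    ci_comp μ X₁₁ (fun ω => (X₂₁ ω, X₃₁ ω)) Q (fun p => h p.1 p.2) c123
  -- entropy additivity under conditional independence
  have e23 : entH μ (fun ω => (X₂₁ ω, X₃₁ ω, Q ω))
      = entH μ (fun ω => (X₂₁ ω, Q ω)) + entH μ (fun ω => (X₃₁ ω, Q ω)) - entH μ Q :=
    entH_condIndep μ X₂₁ X₃₁ Q c23
  have e1S : entH μ (fun ω => (X₁₁ ω, h (X₂₁ ω) (X₃₁ ω), Q ω))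
      = entH μ (fun ω => (X₁₁ ω, Q ω)) + entH μ (fun ω => (h (X₂₁ ω) (X₃₁ ω), Q ω)) - entH μ Q :=
    entH_condIndep μ X₁₁ (fun ω => h (X₂₁ ω) (X₃₁ ω)) Q c1S
  have e123 : entH μ (fun ω => (X₁₁ ω, (X₂₁ ω, X₃₁ ω), Q ω))
      = entH μ (fun ω => (X₁₁ ω, Q ω)) + entH μ (fun ω => ((X₂₁ ω, X₃₁ ω), Q ω)) - entH μ Q :=
    entH_condIndep μ X₁₁ (fun ω => (X₂₁ ω, X₃₁ ω)) Q c123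
  -- relabelings (injective images preserve entropy)
  have a1 : entH μ (fun ω => ((X₂₁ ω, X₃₁ ω), Q ω)) = entH μ (fun ω => (X₂₁ ω, X₃₁ ω, Q ω)) := by
    have hg : Function.Injective (fun x : ℬ × 𝒞 × 𝒬 => ((x.1, x.2.1), x.2.2)) := by
      rintro ⟨a, b, c⟩ ⟨a', b', c'⟩ hxy
      simp_all [Prod.ext_iff]
    exact entH_comp μ (fun ω => (X₂₁ ω, X₃₁ ω, Q ω)) _ hg
  have a2 : entH μ (fun ω => (X₁₁ ω, (X₂₁ ω, X₃₁ ω), Q ω))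
      = entH μ (fun ω => (X₁₁ ω, X₂₁ ω, X₃₁ ω, Q ω)) := by
    have hg : Function.Injective
        (fun x : 𝒜 × ℬ × 𝒞 × 𝒬 => (x.1, (x.2.1, x.2.2.1), x.2.2.2)) := by
      rintro ⟨a, b, c, d⟩ ⟨a', b', c', d'⟩ hxy
      simp_all [Prod.ext_iff]
    exact entH_comp μ (fun ω => (X₁₁ ω, X₂₁ ω, X₃₁ ω, Q ω)) _ hg
  have rS : entH μ (fun ω => (X₂₁ ω, h (X₂₁ ω) (X₃₁ ω), Q ω))
      = entH μ (fun ω => (X₂₁ ω, X₃₁ ω, Q ω)) := by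
    have hg : Function.Injective (fun x : ℬ × 𝒞 × 𝒬 => (x.1, h x.1 x.2.1, x.2.2)) := by
      rintro ⟨a, b, c⟩ ⟨a', b', c'⟩ hxy
      simp only [Prod.ext_iff] at hxy ⊢
      obtain ⟨h1, h2, h3⟩ := hxy
      subst h1
      exact ⟨rfl, hh.2 a h2, h3⟩
    exact entH_comp μ (fun ω => (X₂₁ ω, X₃₁ ω, Q ω)) _ hg
  have rY : entH μ (fun ω => (f (X₁₁ ω) (h (X₂₁ ω) (X₃₁ ω)), h (X₂₁ ω) (X₃₁ ω), Q ω))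
      = entH μ (fun ω => (X₁₁ ω, h (X₂₁ ω) (X₃₁ ω), Q ω)) := by
    have hg : Function.Injective (fun x : 𝒜 × 𝒮 × 𝒬 => (f x.1 x.2.1, x.2.1, x.2.2)) := by
      rintro ⟨a, b, c⟩ ⟨a', b', c'⟩ hxy
      simp only [Prod.ext_iff] at hxy ⊢
      obtain ⟨h1, h2, h3⟩ := hxy
      subst h2
      exact ⟨hf.1 b h1, rfl, h3⟩
    exact entH_comp μ (fun ω => (X₁₁ ω, h (X₂₁ ω) (X₃₁ ω), Q ω)) _ hg
  have rQuad : entH μ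
        (fun ω => (X₂₁ ω, h (X₂₁ ω) (X₃₁ ω), f (X₁₁ ω) (h (X₂₁ ω) (X₃₁ ω)), Q ω))
      = entH μ (fun ω => (X₁₁ ω, X₂₁ ω, X₃₁ ω, Q ω)) := by
    have hg : Function.Injective
        (fun x : 𝒜 × ℬ × 𝒞 × 𝒬 => (x.2.1, h x.2.1 x.2.2.1, f x.1 (h x.2.1 x.2.2.1), x.2.2.2)) := by
      rintro ⟨a, b, c, d⟩ ⟨a', b', c', d'⟩ hxy
      simp only [Prod.ext_iff] at hxy ⊢
      obtain ⟨h1, h2, h3, h4⟩ := hxy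
      subst h1
      have hc : c = c' := hh.2 b h2
      subst hc
      exact ⟨hf.1 (h b c) h3, rfl, rfl, h4⟩
    exact entH_comp μ (fun ω => (X₁₁ ω, X₂₁ ω, X₃₁ ω, Q ω)) _ hg
  have rSwap : entH μ (fun ω => (f (X₁₁ ω) (h (X₂₁ ω) (X₃₁ ω)), X₂₁ ω, Q ω))
      = entH μ (fun ω => (X₂₁ ω, f (X₁₁ ω) (h (X₂₁ ω) (X₃₁ ω)), Q ω)) := by
    have hg : Function.Injective (fun x : ℬ × 𝒴 × 𝒬 => (x.2.1, x.1, x.2.2)) := by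
      rintro ⟨a, b, c⟩ ⟨a', b', c'⟩ hxy
      simp_all [Prod.ext_iff]
    exact entH_comp μ (fun ω => (X₂₁ ω, f (X₁₁ ω) (h (X₂₁ ω) (X₃₁ ω)), Q ω)) _ hg
  have rSwap2 : entH μ (fun ω => (h (X₂₁ ω) (X₃₁ ω), f (X₁₁ ω) (h (X₂₁ ω) (X₃₁ ω)), Q ω))
      = entH μ (fun ω => (f (X₁₁ ω) (h (X₂₁ ω) (X₃₁ ω)), h (X₂₁ ω) (X₃₁ ω), Q ω)) := by
    have hg : Function.Injective (fun x : 𝒴 × 𝒮 × 𝒬 => (x.2.1, x.1, x.2.2)) := by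
      rintro ⟨a, b, c⟩ ⟨a', b', c'⟩ hxy
      simp_all [Prod.ext_iff]
    exact entH_comp μ (fun ω => (f (X₁₁ ω) (h (X₂₁ ω) (X₃₁ ω)), h (X₂₁ ω) (X₃₁ ω), Q ω)) _ hg
  -- submodularity instance
  have submod : entH μ
        (fun ω => (X₂₁ ω, h (X₂₁ ω) (X₃₁ ω), f (X₁₁ ω) (h (X₂₁ ω) (X₃₁ ω)), Q ω))
        + entH μ (fun ω => (f (X₁₁ ω) (h (X₂₁ ω) (X₃₁ ω)), Q ω))
      ≤ entH μ (fun ω => (X₂₁ ω, f (X₁₁ ω) (h (X₂₁ ω) (X₃₁ ω)), Q ω))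
        + entH μ (fun ω => (h (X₂₁ ω) (X₃₁ ω), f (X₁₁ ω) (h (X₂₁ ω) (X₃₁ ω)), Q ω)) := by
    have := entH_submod μ X₂₁ (fun ω => h (X₂₁ ω) (X₃₁ ω))
      (fun ω => (f (X₁₁ ω) (h (X₂₁ ω) (X₃₁ ω)), Q ω))
    exact this
  simp only [condH, ge_iff_le]
  constructor <;> linarith [e23, e1S, e123, a1, a2, rS, rY, rQuad, rSwap, rSwap2, submod]
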